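/- Let g₁ and g₂ be real Lie algebras with inner products ⟨·,·⟩₁ and ⟨·,·⟩₂, and let π: g₁ → Der(g₂) be a Lie algebra homomorphism into the derivations of g₂. Equip the semidirect sum g₁ ⋉_π g₂ with the product inner product. Then this inner product is cyclic if and only if ⟨·,·⟩₁ and ⟨·,·⟩₂ are cyclic and for each X₁ ∈ g₁ the derivation π(X₁) is self-adjoint with respect to ⟨·,·⟩₂. -/
import Mathlib


/-- The bracket of the semidirect sum `g₁ ⋉_π g₂`. -/
def sdBracket {L₁ L₂ : Type*} [LieRing L₁] [LieAlgebra ℝ L₁] [LieRing L₂] [LieAlgebra ℝ L₂]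
    (π : L₁ →ₗ[ℝ] L₂ →ₗ[ℝ] L₂) (p q : L₁ × L₂) : L₁ × L₂ :=
  (⁅p.1, q.1⁆, ⁅p.2, q.2⁆ + π p.1 q.2 - π q.1 p.2)

/-- The product inner product on `g₁ × g₂`. -/
def sdInner {L₁ L₂ : Type*} [LieRing L₁] [LieAlgebra ℝ L₁] [LieRing L₂] [LieAlgebra ℝ L₂]
    (B₁ : L₁ →ₗ[ℝ] L₁ →ₗ[ℝ] ℝ) (B₂ : L₂ →ₗ[ℝ] L₂ →ₗ[ℝ] ℝ) (p q : L₁ × L₂) : ℝ :=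
  B₁ p.1 q.1 + B₂ p.2 q.2

/-- The product inner product on the semidirect sum `g₁ ⋉_π g₂` is cyclic iff
both inner products are cyclic and each `π(X₁)` is self-adjoint w.r.t. `⟨·,·⟩₂`. -/
theorem semidirect_cyclic_iff {L₁ L₂ : Type*}
    [LieRing L₁] [LieAlgebra ℝ L₁] [LieRing L₂] [LieAlgebra ℝ L₂]
    (B₁ : L₁ →ₗ[ℝ] L₁ →ₗ[ℝ] ℝ) (B₂ : L₂ →ₗ[ℝ] L₂ →ₗ[ℝ] ℝ)
    (h₁symm : ∀ x y : L₁, B₁ x y = B₁ y x)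
    (h₁pos : ∀ x : L₁, x ≠ 0 → 0 < B₁ x x)
    (h₂symm : ∀ x y : L₂, B₂ x y = B₂ y x)
    (h₂pos : ∀ x : L₂, x ≠ 0 → 0 < B₂ x x)
    (π : L₁ →ₗ[ℝ] L₂ →ₗ[ℝ] L₂)
    (hder : ∀ (X : L₁) (a b : L₂), π X ⁅a, b⁆ = ⁅π X a, b⁆ + ⁅a, π X b⁆)
    (hhom : ∀ (X Y : L₁) (a : L₂), π ⁅X, Y⁆ a = π X (π Y a) - π Y (π X a)) :
    (∀ p q r : L₁ × L₂,
        sdInner B₁ B₂ (sdBracket π p q) r + sdInner B₁ B₂ (sdBracket π q r) p +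
          sdInner B₁ B₂ (sdBracket π r p) q = 0) ↔
      ((∀ X Y Z : L₁, B₁ ⁅X, Y⁆ Z + B₁ ⁅Y, Z⁆ X + B₁ ⁅Z, X⁆ Y = 0) ∧
        (∀ X Y Z : L₂, B₂ ⁅X, Y⁆ Z + B₂ ⁅Y, Z⁆ X + B₂ ⁅Z, X⁆ Y = 0) ∧
        (∀ (X : L₁) (a b : L₂), B₂ (π X a) b = B₂ a (π X b))) := by
  constructor
  · intro h
    refine ⟨fun X Y Z => ?_, fun X Y Z => ?_, fun X a b => ?_⟩
    · have := h (X, 0) (Y, 0) (Z, 0)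
      simpa [sdInner, sdBracket] using this
    · have := h (0, X) (0, Y) (0, Z)
      simpa [sdInner, sdBracket] using this
    · have := h (X, 0) (0, a) (0, b)
      simp [sdInner, sdBracket] at this
      have hs := h₂symm (π X b) a
      linarith
  · rintro ⟨hc₁, hc₂, hsa⟩ p q r
    obtain ⟨X, x⟩ := p; obtain ⟨Y, y⟩ := q; obtain ⟨Z, z⟩ := r
    simp only [sdInner, sdBracket, map_add, map_sub, LinearMap.add_apply,
      LinearMap.sub_apply]
    have e1 := hc₁ X Y Z
    have e2 := hc₂ x y z
    have a1 := hsa X y z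
    have a2 := hsa Y z x
    have a3 := hsa Z x y
    have s1 := h₂symm y (π X z)
    have s2 := h₂symm z (π Y x)
    have s3 := h₂symm x (π Z y)
    linarith
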